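/- Hyperbolic midpoint formula: for x, y ∈ B², the point m_H(x,y) = (y(1−|x|²) + x(1−|y|²)) / (1−|x|²|y|² + A[x,y]√((1−|x|²)(1−|y|²))), where A[x,y] = √(|x−y|² + (1−|x|²)(1−|y|²)), lies in B² and satisfies ρ(x, m_H(x,y)) = ρ(m_H(x,y), y) = ρ(x,y)/2. -/

import Mathlib

set_option maxHeartbeats 1000000


noncomputable def hypDist (x y : ℂ) : ℝ :=
  2 * Real.arsinh (‖x - y‖ /
    Real.sqrt ((1 - ‖x‖ ^ 2) * (1 - ‖y‖ ^ 2)))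

private lemma absSub_sq (z w : ℂ) (p q : ℝ) :
    (‖z * (p : ℂ) - w * (q : ℂ)‖)^2 =
      p^2 * (‖z‖)^2 - 2*p*q*(z * (starRingEnd ℂ) w).re + q^2 * (‖w‖)^2 := by
  simp only [Complex.sq_norm, Complex.normSq_apply, Complex.sub_re, Complex.sub_im,
    Complex.mul_re, Complex.mul_im, Complex.ofReal_re, Complex.ofReal_im,
    Complex.conj_re, Complex.conj_im]
  ring

private lemma absAdd_sq (z w : ℂ) (p q : ℝ) :
    (‖z * (p : ℂ) + w * (q : ℂ)‖)^2 =
      p^2 * (‖z‖)^2 + 2*p*q*(z * (starRingEnd ℂ) w).re + q^2 * (‖w‖)^2 := by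
  simp only [Complex.sq_norm, Complex.normSq_apply, Complex.add_re, Complex.add_im,
    Complex.mul_re, Complex.mul_im, Complex.ofReal_re, Complex.ofReal_im,
    Complex.conj_re, Complex.conj_im]
  ring

theorem stmt16 (x y : ℂ) (hx : ‖x‖ < 1) (hy : ‖y‖ < 1)
    (A : ℝ)
    (hA : A = Real.sqrt (‖x - y‖ ^ 2 + (1 - ‖x‖ ^ 2) * (1 - ‖y‖ ^ 2)))
    (m : ℂ)
    (hm : m = (y * ((1 - ‖x‖ ^ 2 : ℝ) : ℂ) + x * ((1 - ‖y‖ ^ 2 : ℝ) : ℂ)) /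
      (((1 - ‖x‖ ^ 2 * ‖y‖ ^ 2 +
          A * Real.sqrt ((1 - ‖x‖ ^ 2) * (1 - ‖y‖ ^ 2)) : ℝ)) : ℂ)) :
    ‖m‖ < 1 ∧ hypDist x m = hypDist x y / 2 ∧ hypDist m y = hypDist x y / 2 := by
  have hx0 : (0:ℝ) ≤ ‖x‖ := norm_nonneg x
  have hy0 : (0:ℝ) ≤ ‖y‖ := norm_nonneg y
  set a : ℝ := ‖x‖ ^ 2 with hadef
  set b : ℝ := ‖y‖ ^ 2 with hbdef
  set c : ℝ := ‖x - y‖ with hcdef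
  set r : ℝ := (x * (starRingEnd ℂ) y).re with hrdef
  have ha0 : 0 ≤ a := by rw [hadef]; positivity
  have hb0 : 0 ≤ b := by rw [hbdef]; positivity
  have hc0 : 0 ≤ c := norm_nonneg _
  have ha1 : a < 1 := by rw [hadef]; nlinarith
  have hb1 : b < 1 := by rw [hbdef]; nlinarith
  have hu : (0:ℝ) < 1 - a := by linarith
  have hv : (0:ℝ) < 1 - b := by linarith
  set s : ℝ := Real.sqrt ((1 - a) * (1 - b)) with hsdef
  have hs0 : 0 < s := Real.sqrt_pos.mpr (by positivity)
  have hs2 : s^2 = (1 - a) * (1 - b) := Real.sq_sqrt (by positivity)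
  have hc2 : c^2 = a + b - 2*r := by
    rw [hcdef, hadef, hbdef, hrdef]
    simp only [Complex.sq_norm, Complex.normSq_apply, Complex.sub_re, Complex.sub_im,
      Complex.mul_re, Complex.conj_re, Complex.conj_im]
    ring
  have hA0 : 0 < A := by
    rw [hA]
    apply Real.sqrt_pos.mpr
    nlinarith [sq_nonneg c]
  have hA2 : A^2 = 1 + a*b - 2*r := by
    rw [hA, Real.sq_sqrt (by nlinarith [sq_nonneg c])]
    linarith [hc2]
  have hAs : s ≤ A := by
    nlinarith [sq_nonneg c, hc2, hA2, hs2]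
  set D : ℝ := 1 - a*b + A*s with hDdef
  clear_value a b c r s D
  have hD0 : 0 < D := by rw [hDdef]; nlinarith
  have hDne : (D:ℂ) ≠ 0 := Complex.ofReal_ne_zero.mpr hD0.ne'
  -- |m| = |N|/D
  have habsm : ‖m‖ = ‖y * ((1 - a : ℝ):ℂ) + x * ((1 - b : ℝ):ℂ)‖ / D := by
    rw [hm, norm_div, Complex.norm_real, Real.norm_eq_abs, abs_of_pos hD0]
  have hsym : (y * (starRingEnd ℂ) x).re = r := by
    rw [hrdef]
    simp only [Complex.mul_re, Complex.conj_re, Complex.conj_im]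
    ring
  have habsN2 : (‖y * ((1 - a : ℝ):ℂ) + x * ((1 - b : ℝ):ℂ)‖)^2
      = (1-a)^2 * b + 2*((1-a)*(1-b))*r + (1-b)^2 * a := by
    rw [absAdd_sq, hsym, ← hadef, ← hbdef]
    ring
  -- W identity : D^2 - |N|^2 = 2 A s D
  have hW : (1-a)^2 * b + 2*((1-a)*(1-b))*r + (1-b)^2 * a = D^2 - 2*A*s*D := by
    rw [hDdef]
    linear_combination (A^2) * hs2 + (1 - b - a + a*b) * hA2
  -- 1 - |m|^2 = 2 A s / D
  have hw : 1 - (‖m‖)^2 = 2*A*s/D := by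
    rw [habsm, div_pow, habsN2, hW]
    field_simp
    ring
  have hmlt : ‖m‖ < 1 := by
    have h2 : (‖m‖)^2 < 1 := by
      have : 0 < 2*A*s/D := by positivity
      linarith
    nlinarith [norm_nonneg m]
  refine ⟨hmlt, ?_, ?_⟩
  · -- hypDist x m = hypDist x y / 2
    have hxm : x - m = (x * ((b*(1-a) + A*s : ℝ):ℂ) - y * ((1-a : ℝ):ℂ)) / (D:ℂ) := by
      rw [hm]
      field_simp [hDne]
      rw [hDdef]
      push_cast
      ring
    have hP2 : (‖x - m‖)^2 = (A*(1-a)*(A-s)) / D := by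
      rw [hxm, norm_div, Complex.norm_real, Real.norm_eq_abs, abs_of_pos hD0, div_pow, absSub_sq, ← hadef,
        ← hbdef, ← hrdef]
      rw [div_eq_div_iff (by positivity) hD0.ne']
      rw [hDdef]
      linear_combination ((1 - a*b + A*s) * A^2) * hs2 +
        ((1 - a*b + A*s) * (-(s*A) - b + a*s*A + 2*a*b - a^2*b)) * hA2
    set t : ℝ := ‖x - m‖ / Real.sqrt ((1 - a) * (1 - ‖m‖ ^ 2)) with htdef
    clear_value t
    have ht0 : 0 ≤ t := by rw [htdef]; positivity
    have hE0 : 0 < (1 - a) * (1 - ‖m‖ ^ 2) := by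
      rw [hw]; positivity
    have ht2 : t^2 = (A - s)/(2*s) := by
      rw [htdef, div_pow, Real.sq_sqrt hE0.le, hP2, hw]
      rw [div_eq_div_iff (by positivity) (by positivity)]
      field_simp [hD0.ne']
    have h1t : 1 + t^2 = (A + s)/(2*s) := by rw [ht2]; field_simp [hs0.ne']; ring
    have hkey : Real.sinh (2 * Real.arsinh t) = c / s := by
      rw [Real.sinh_two_mul, Real.sinh_arsinh, Real.cosh_arsinh]
      have hL : 0 ≤ 2 * t * Real.sqrt (1 + t^2) := by positivity
      have hR : 0 ≤ c / s := by positivity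
      have hAc : (A - s) * (A + s) = c^2 := by linear_combination hA2 - hs2 - hc2
      have h4 : (2 * t * Real.sqrt (1 + t^2))^2 = (c/s)^2 := by
        rw [mul_pow, mul_pow, Real.sq_sqrt (by positivity), h1t, ht2, div_pow]
        have hstep : 2^2 * ((A - s)/(2*s)) * ((A + s)/(2*s)) = ((A - s)*(A + s))/s^2 := by
          field_simp [hs0.ne']
        rw [hstep, hAc]
      calc 2 * t * Real.sqrt (1 + t^2) = Real.sqrt ((2 * t * Real.sqrt (1 + t^2))^2) :=
            (Real.sqrt_sq hL).symm
        _ = Real.sqrt ((c/s)^2) := by rw [h4]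
        _ = c / s := Real.sqrt_sq hR
    have harsinh : Real.arsinh (c/s) = 2 * Real.arsinh t := by
      rw [← hkey, Real.arsinh_sinh]
    unfold hypDist
    rw [← hcdef, ← hadef, ← hbdef, ← hsdef, harsinh, ← htdef]
    ring
  · -- hypDist m y = hypDist x y / 2
    have hym : m - y = (x * ((1-b : ℝ):ℂ) - y * ((a*(1-b) + A*s : ℝ):ℂ)) / (D:ℂ) := by
      rw [hm]
      field_simp [hDne]
      rw [hDdef]
      push_cast
      ring
    have hQ2 : (‖m - y‖)^2 = (A*(1-b)*(A-s)) / D := by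
      rw [hym, norm_div, Complex.norm_real, Real.norm_eq_abs, abs_of_pos hD0, div_pow, absSub_sq, ← hadef,
        ← hbdef, ← hrdef]
      rw [div_eq_div_iff (by positivity) hD0.ne']
      rw [hDdef]
      linear_combination ((1 - a*b + A*s) * A^2) * hs2 +
        ((1 - a*b + A*s) * (-(s*A) + b*s*A - a + 2*a*b - a*b^2)) * hA2
    set t : ℝ := ‖m - y‖ / Real.sqrt ((1 - ‖m‖ ^ 2) * (1 - b)) with htdef
    clear_value t
    have ht0 : 0 ≤ t := by rw [htdef]; positivity
    have hE0 : 0 < (1 - ‖m‖ ^ 2) * (1 - b) := by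
      rw [hw]; positivity
    have ht2 : t^2 = (A - s)/(2*s) := by
      rw [htdef, div_pow, Real.sq_sqrt hE0.le, hQ2, hw]
      rw [div_eq_div_iff (by positivity) (by positivity)]
      field_simp [hD0.ne']
    have h1t : 1 + t^2 = (A + s)/(2*s) := by rw [ht2]; field_simp [hs0.ne']; ring
    have hkey : Real.sinh (2 * Real.arsinh t) = c / s := by
      rw [Real.sinh_two_mul, Real.sinh_arsinh, Real.cosh_arsinh]
      have hL : 0 ≤ 2 * t * Real.sqrt (1 + t^2) := by positivity
      have hR : 0 ≤ c / s := by positivity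
      have hAc : (A - s) * (A + s) = c^2 := by linear_combination hA2 - hs2 - hc2
      have h4 : (2 * t * Real.sqrt (1 + t^2))^2 = (c/s)^2 := by
        rw [mul_pow, mul_pow, Real.sq_sqrt (by positivity), h1t, ht2, div_pow]
        have hstep : 2^2 * ((A - s)/(2*s)) * ((A + s)/(2*s)) = ((A - s)*(A + s))/s^2 := by
          field_simp [hs0.ne']
        rw [hstep, hAc]
      calc 2 * t * Real.sqrt (1 + t^2) = Real.sqrt ((2 * t * Real.sqrt (1 + t^2))^2) :=
            (Real.sqrt_sq hL).symm
        _ = Real.sqrt ((c/s)^2) := by rw [h4]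
        _ = c / s := Real.sqrt_sq hR
    have harsinh : Real.arsinh (c/s) = 2 * Real.arsinh t := by
      rw [← hkey, Real.arsinh_sinh]
    unfold hypDist
    rw [← hcdef, ← hadef, ← hbdef, ← hsdef, harsinh, ← htdef]
    ring
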